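/- Let the action of G on (S, μ) be ergodic and have property T. Let H be a locally compact second countable group with left Haar measure λ, and let α : S × G → H be a map with s ↦ α(s,g) measurable for each g ∈ G, satisfying the strict cocycle identity α(s, g₁g₂) = α(s, g₁) α(g₁⁻¹•s, g₂) for all s ∈ S and g₁, g₂ ∈ G. Consider the skew-product action of G on (S × H, μ ⊗ λ) given by g•(s, h) = (g•s, α(g•s, g) h), which is a quasi-invariant action. If the skew-product action is ergodic, then the group H has property T. -/

import Mathlib

open MeasureTheory Filter Topology
open scoped Pointwise symmDiff InnerProductSpace ENNReal

section Defs

variable (G : Type*) {X : Type*} [Group G] [MulAction G X] [MeasurableSpace X]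

/-- The action of `G` on `X` is measurable and the measure `μ` is quasi-invariant:
for every `g`, the pushforward of `μ` under `x ↦ g • x` is equivalent to `μ`. -/
def QuasiInvariantAction (μ : Measure X) : Prop :=
  (∀ g : G, Measurable fun x : X => g • x) ∧
    ∀ g : G, μ.map (fun x : X => g • x) ≪ μ ∧ μ ≪ μ.map (fun x : X => g • x)

/-- Ergodicity of the action: every measurable `A` with `μ((g • A) ∆ A) = 0` for all `g`
is null or conull. -/
def IsErgodicSMulAction (μ : Measure X) : Prop :=
  ∀ A : Set X, MeasurableSet A → (∀ g : G, μ ((g • A) ∆ A) = 0) → μ A = 0 ∨ μ A = 1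

variable {G}
variable {K : Type*} [NormedAddCommGroup K] [InnerProductSpace ℂ K]
  [MeasurableSpace K] [BorelSpace K]

/-- A representation of the action groupoid `X ⋊ G` on the Hilbert space `K`. -/
def IsGroupoidRep (μ : Measure X) (L : X → G → (K ≃ₗᵢ[ℂ] K)) : Prop :=
  (∀ (g : G) (v : K), Measurable fun x : X => L x g v) ∧
    ∀ g₁ g₂ : G, ∀ᵐ x ∂μ, ∀ v : K, L x (g₁ * g₂) v = L x g₁ (L (g₁⁻¹ • x) g₂ v)

/-- An `L`-cocycle. -/
def IsLCocycle (μ : Measure X) (L : X → G → (K ≃ₗᵢ[ℂ] K)) (b : X → G → K) : Prop :=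
  (∀ g : G, Measurable fun x : X => b x g) ∧
    ∀ g₁ g₂ : G, ∀ᵐ x ∂μ, b x (g₁ * g₂) = b x g₁ + L x g₁ (b (g₁⁻¹ • x) g₂)

/-- An `L`-coboundary. -/
def IsLCoboundary (μ : Measure X) (L : X → G → (K ≃ₗᵢ[ℂ] K)) (b : X → G → K) : Prop :=
  ∃ ξ : X → K, Measurable ξ ∧ ∀ g : G, ∀ᵐ x ∂μ, b x g = ξ x - L x g (ξ (g⁻¹ • x))

/-- A unit section: a measurable map `ξ : X → K` of norm one almost everywhere. -/
def IsUnitSection (μ : Measure X) (ξ : X → K) : Prop :=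
  Measurable ξ ∧ ∀ᵐ x ∂μ, ‖ξ x‖ = 1

/-- The representation `L` has an invariant unit section. -/
def HasInvariantUnitSection (μ : Measure X) (L : X → G → (K ≃ₗᵢ[ℂ] K)) : Prop :=
  ∃ ξ : X → K, IsUnitSection μ ξ ∧ ∀ g : G, ∀ᵐ x ∂μ, L x g (ξ (g⁻¹ • x)) = ξ x

/-- The representation `L` almost has invariant unit sections. -/
def AlmostHasInvariantUnitSections (μ : Measure X) (L : X → G → (K ≃ₗᵢ[ℂ] K)) : Prop :=
  ∃ ξ : ℕ → X → K, (∀ n, IsUnitSection μ (ξ n)) ∧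
    ∀ g : G, ∀ᵐ x ∂μ,
      Tendsto (fun n => ‖L x g (ξ n (g⁻¹ • x)) - ξ n x‖) atTop (𝓝 0)

variable (G)

/-- Property (T) for the action of `G` on `(X, μ)`: every representation of `X ⋊ G`
on a separable complex Hilbert space that almost has invariant unit sections has an
invariant unit section. -/
def ActionHasPropertyT (μ : Measure X) : Prop :=
  ∀ (K : Type) [NormedAddCommGroup K] [InnerProductSpace ℂ K]
    [CompleteSpace K] [SecondCountableTopology K]
    [MeasurableSpace K] [BorelSpace K]
    (L : X → G → (K ≃ₗᵢ[ℂ] K)),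
    IsGroupoidRep μ L → AlmostHasInvariantUnitSections μ L → HasInvariantUnitSection μ L

end Defs

/-- Property (T) for a locally compact group `H`: every strongly continuous unitary
representation of `H` on a separable complex Hilbert space with almost invariant unit
vectors (uniformly on compact sets) has a nonzero invariant vector. -/
def LCGroupHasPropertyT (H : Type*) [Group H] [TopologicalSpace H] : Prop :=
  ∀ (K : Type) [NormedAddCommGroup K] [InnerProductSpace ℂ K]
    [CompleteSpace K] [SecondCountableTopology K]
    (π : H →* (K ≃ₗᵢ[ℂ] K)),
    (∀ v : K, Continuous fun h : H => π h v) →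
    (∀ Q : Set H, IsCompact Q → ∀ ε : ℝ, 0 < ε →
      ∃ ξ : K, ‖ξ‖ = 1 ∧ ∀ h ∈ Q, ‖π h ξ - ξ‖ < ε) →
    ∃ v : K, v ≠ 0 ∧ ∀ h : H, π h v = v

/-- Let `G` be a countable discrete group with an ergodic quasi-invariant property (T) action
on a standard Borel probability space `(S, μ)`, `H` a locally compact second countable group
with left Haar measure `lam`, and `α : S × G → H` a strict measurable cocycle. If the
skew-product action `g • (s, h) = (g • s, α (g • s, g) h)` of `G` on `(S × H, μ ⊗ lam)`
is ergodic, then `H` has property (T). -/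
theorem skewProduct_ergodic_implies_group_propertyT
    {G S : Type*} [Group G] [Countable G]
    [MeasurableSpace S] [StandardBorelSpace S] [MulAction G S]
    (μ : Measure S) [IsProbabilityMeasure μ]
    (hqi : QuasiInvariantAction G μ) (herg : IsErgodicSMulAction G μ)
    (hT : ActionHasPropertyT G μ)
    {H : Type*} [Group H] [TopologicalSpace H] [IsTopologicalGroup H]
    [LocallyCompactSpace H] [SecondCountableTopology H]
    [MeasurableSpace H] [BorelSpace H]
    (lam : Measure H) [lam.IsHaarMeasure]
    (α : S → G → H)
    (hαmeas : ∀ g : G, Measurable fun s : S => α s g)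
    (hαcoc : ∀ (s : S) (g₁ g₂ : G), α s (g₁ * g₂) = α s g₁ * α (g₁⁻¹ • s) g₂)
    (hskewerg : ∀ B : Set (S × H), MeasurableSet B →
      (∀ g : G,
        (μ.prod lam) (((fun p : S × H => (g • p.1, α (g • p.1) g * p.2)) '' B) ∆ B) = 0) →
      (μ.prod lam) B = 0 ∨ (μ.prod lam) Bᶜ = 0) :
    LCGroupHasPropertyT H := by
  intro K _ _ _ _ π hcont halmost
  letI : MeasurableSpace K := borel K
  haveI : BorelSpace K := ⟨rfl⟩
  -- joint continuity of the representation
  have hjc : Continuous fun q : H × K => π q.1 q.2 := by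
    rw [continuous_iff_continuousAt]
    rintro ⟨h₀, v₀⟩
    have h1 : Tendsto (fun q : H × K => π q.1 (q.2 - v₀)) (𝓝 (h₀, v₀)) (𝓝 0) := by
      rw [tendsto_zero_iff_norm_tendsto_zero]
      have heq : (fun q : H × K => ‖(π q.1) (q.2 - v₀)‖) = fun q : H × K => ‖q.2 - v₀‖ := by
        funext q; exact (π q.1).norm_map _
      rw [heq]
      have := ((continuous_snd.sub (continuous_const : Continuous fun _ : H × K => v₀)).norm).tendsto
        (h₀, v₀)
      simpa using this
    have h2 : Tendsto (fun q : H × K => π q.1 v₀) (𝓝 (h₀, v₀)) (𝓝 (π h₀ v₀)) :=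
      ((hcont v₀).comp continuous_fst).tendsto (h₀, v₀)
    have h3 := h1.add h2
    have heq : (fun q : H × K => π q.1 (q.2 - v₀) + π q.1 v₀) = fun q : H × K => π q.1 q.2 := by
      funext q
      rw [← (π q.1).map_add, sub_add_cancel]
    rw [heq, zero_add] at h3
    exact h3
  -- basic cocycle identities
  have hα1 : ∀ s, α s 1 = 1 := by
    intro s
    have := hαcoc s 1 1
    simp only [mul_one, inv_one, one_smul] at this
    exact (left_eq_mul.mp this)
  have hαinv : ∀ s g, α s g⁻¹ * α (g • s) g = 1 := by
    intro s g
    have := hαcoc s g⁻¹ g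
    simp only [inv_mul_cancel, inv_inv, hα1] at this
    exact this.symm
  -- the skew-product maps
  set T : G → S × H → S × H := fun g p => (g • p.1, α (g • p.1) g * p.2) with hTdef
  have hTinv : ∀ g p, T g⁻¹ (T g p) = p := by
    rintro g ⟨s, h⟩
    simp only [hTdef]
    refine Prod.ext (by simp) ?_
    simp only [inv_smul_smul, ← mul_assoc, hαinv s g, one_mul]
  have hEq : ∀ g : G, ∃ e : (S × H) ≃ (S × H), (⇑e = T g) ∧ (⇑e.symm = T g⁻¹) := by
    intro g
    refine ⟨⟨T g, T g⁻¹, hTinv g, fun p => ?_⟩, rfl, rfl⟩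
    have := hTinv g⁻¹ p
    simpa using this
  -- the groupoid representation
  set L : S → G → (K ≃ₗᵢ[ℂ] K) := fun s g => π (α s g) with hL
  have hrep : IsGroupoidRep μ L := by
    constructor
    · intro g v
      exact ((hcont v).measurable).comp (hαmeas g)
    · intro g₁ g₂
      refine ae_of_all _ fun x v => ?_
      simp only [hL, hαcoc x g₁ g₂, map_mul]
      rfl
  -- almost invariant sections from almost invariant vectors
  have hsec : AlmostHasInvariantUnitSections μ L := by
    set Q := CompactExhaustion.choice H with hQ
    have hpos : ∀ n : ℕ, (0:ℝ) < 1 / (n + 1) := fun n => by positivity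
    choose v hv1 hv2 using fun n : ℕ => halmost (Q n) (Q.isCompact n) (1 / (n + 1)) (hpos n)
    refine ⟨fun n _ => v n, fun n => ⟨measurable_const, ae_of_all _ fun _ => hv1 n⟩, ?_⟩
    intro g
    refine ae_of_all _ fun x => ?_
    obtain ⟨N, hN⟩ := Q.exists_mem (α x g)
    refine squeeze_zero' (Eventually.of_forall fun n => norm_nonneg _) ?_
      tendsto_one_div_add_atTop_nhds_zero_nat
    rw [eventually_atTop]
    exact ⟨N, fun n hn => le_of_lt (hv2 n (α x g) (Q.subset hn hN))⟩
  -- apply property (T) of the action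
  obtain ⟨ξ, ⟨hξm, hξ1⟩, hξinv⟩ := hT K L hrep hsec
  -- the invariant function on the skew product
  set Φ : S × H → K := fun p => π p.2⁻¹ (ξ p.1) with hΦ
  have hΦm : Measurable Φ :=
    hjc.measurable.comp ((measurable_snd.inv).prodMk (hξm.comp measurable_fst))
  -- lifting a.e. statements from μ to μ.prod lam
  have lift : ∀ (P : S → Prop), (∀ᵐ s ∂μ, P s) → ∀ᵐ p ∂μ.prod lam, P p.1 := by
    intro P hP
    rw [ae_iff] at hP ⊢
    obtain ⟨M, hsub, hMm, hM0⟩ := exists_measurable_superset_of_null hP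
    refine measure_mono_null (fun p hp => ?_) (?_ : (μ.prod lam) (M ×ˢ Set.univ) = 0)
    · exact ⟨hsub hp, Set.mem_univ _⟩
    · rw [Measure.prod_prod, hM0, zero_mul]
  -- ae invariance of Φ under the skew-product action
  have hkey : ∀ g : G, ∀ᵐ p ∂μ.prod lam, Φ (T g p) = Φ p := by
    intro g
    have h1 : ∀ᵐ s ∂μ, π (α (g • s) g) (ξ s) = ξ (g • s) := by
      have hm : AEMeasurable (fun s : S => g • s) μ := (hqi.1 g).aemeasurable
      have h2 : ∀ᵐ y ∂(μ.map (fun s : S => g • s)), (π (α y g)) (ξ (g⁻¹ • y)) = ξ y :=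
        ((hqi.2 g).1).ae_le (hξinv g)
      have h3 := ae_of_ae_map hm h2
      filter_upwards [h3] with s hs
      simpa [inv_smul_smul] using hs
    filter_upwards [lift _ h1] with p hp
    show π (α (g • p.1) g * p.2)⁻¹ (ξ (g • p.1)) = π p.2⁻¹ (ξ p.1)
    rw [mul_inv_rev, map_mul]
    have : π (α (g • p.1) g)⁻¹ (ξ (g • p.1)) = ξ p.1 := by
      rw [← hp]
      show (π (α (g • p.1) g)⁻¹ * π (α (g • p.1) g)) (ξ p.1) = ξ p.1
      rw [← map_mul, inv_mul_cancel, map_one]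
      rfl
    show π p.2⁻¹ (π (α (g • p.1) g)⁻¹ (ξ (g • p.1))) = _
    rw [this]
  -- ergodicity: preimages of measurable sets under Φ are null or conull
  have hinv : ∀ C : Set K, MeasurableSet C →
      (μ.prod lam) (Φ ⁻¹' C) = 0 ∨ (μ.prod lam) (Φ ⁻¹' C)ᶜ = 0 := by
    intro C hC
    refine hskewerg _ (hΦm hC) fun g => ?_
    obtain ⟨e, he1, he2⟩ := hEq g
    show (μ.prod lam) ((T g '' (Φ ⁻¹' C)) ∆ (Φ ⁻¹' C)) = 0
    have himg : T g '' (Φ ⁻¹' C) = T g⁻¹ ⁻¹' (Φ ⁻¹' C) := by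
      rw [← he1, ← he2, Equiv.image_eq_preimage_symm]
    rw [himg]
    have hnull : (μ.prod lam) {p : S × H | ¬ Φ (T g⁻¹ p) = Φ p} = 0 := by
      have := hkey g⁻¹
      rwa [ae_iff] at this
    refine measure_mono_null (fun p hp => ?_) hnull
    rcases hp with ⟨hp1, hp2⟩ | ⟨hp1, hp2⟩
    · intro h
      apply hp2
      have hp1' : Φ (T g⁻¹ p) ∈ C := hp1
      show Φ p ∈ C
      rwa [← h]
    · intro h
      apply hp2
      have hp1' : Φ p ∈ C := hp1
      show Φ (T g⁻¹ p) ∈ C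
      rwa [h]
  -- total measure is nonzero
  have htot : (μ.prod lam) Set.univ ≠ 0 := by
    rw [← Set.univ_prod_univ, Measure.prod_prod, measure_univ, one_mul]
    exact IsOpen.measure_ne_zero lam isOpen_univ ⟨1, Set.mem_univ _⟩
  have hprodne : μ.prod lam ≠ 0 := fun h => htot (by simp [h])
  haveI : (ae (μ.prod lam)).NeBot := ae_neBot.mpr hprodne
  -- find the essential value of Φ
  obtain ⟨u, hu⟩ := TopologicalSpace.exists_dense_seq K
  have hball : ∀ n : ℕ, ∃ m : ℕ,
      (μ.prod lam) (Φ ⁻¹' Metric.ball (u m) (1 / (n + 1)))ᶜ = 0 := by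
    intro n
    by_contra hcon
    push_neg at hcon
    have hnull : ∀ m, (μ.prod lam) (Φ ⁻¹' Metric.ball (u m) (1 / (n + 1))) = 0 := fun m =>
      (hinv _ measurableSet_ball).resolve_right (hcon m)
    have hU : (μ.prod lam) (⋃ m, Φ ⁻¹' Metric.ball (u m) (1 / (n + 1))) = 0 :=
      measure_iUnion_null hnull
    refine htot (measure_mono_null (fun p _ => ?_) hU)
    obtain ⟨m, hm⟩ := hu.exists_dist_lt (Φ p) (show (0:ℝ) < 1 / (n + 1) by positivity)
    exact Set.mem_iUnion.mpr ⟨m, by simpa [Metric.mem_ball, dist_comm] using hm⟩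
  choose c hc using hball
  have hae : ∀ᵐ p ∂μ.prod lam, ∀ n : ℕ, Φ p ∈ Metric.ball (u (c n)) (1 / (n + 1)) := by
    rw [ae_all_iff]
    intro n
    rw [ae_iff]
    exact measure_mono_null (fun p hp => hp) (hc n)
  have hnormΦ : ∀ᵐ p ∂μ.prod lam, ‖Φ p‖ = 1 := by
    filter_upwards [lift _ hξ1] with p hp
    show ‖π p.2⁻¹ (ξ p.1)‖ = 1
    rw [(π p.2⁻¹).norm_map]
    exact hp
  obtain ⟨p₀, hp₀, hp₀n⟩ := (hae.and hnormΦ).exists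
  set v₀ := Φ p₀ with hv₀
  have h2n : Tendsto (fun n : ℕ => 2 / ((n:ℝ) + 1)) atTop (𝓝 0) := by
    have := tendsto_one_div_add_atTop_nhds_zero_nat.const_mul (2:ℝ)
    simpa [div_eq_mul_inv, mul_comm, mul_assoc, one_div] using this
  have hconst : ∀ᵐ p ∂μ.prod lam, Φ p = v₀ := by
    filter_upwards [hae] with p hp
    have hd : ∀ n : ℕ, dist (Φ p) v₀ ≤ 2 / ((n:ℝ) + 1) := by
      intro n
      have h1 := hp n
      have h2 := hp₀ n
      rw [Metric.mem_ball] at h1 h2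
      calc dist (Φ p) v₀ ≤ dist (Φ p) (u (c n)) + dist (u (c n)) v₀ := dist_triangle _ _ _
        _ ≤ 1 / ((n:ℝ) + 1) + 1 / ((n:ℝ) + 1) := by
            have := dist_comm (u (c n)) v₀ ▸ h2
            exact add_le_add h1.le ((dist_comm (u (c n)) v₀).le.trans h2.le)
        _ = 2 / ((n:ℝ) + 1) := by ring
    have : dist (Φ p) v₀ ≤ 0 := ge_of_tendsto h2n (Eventually.of_forall hd)
    exact dist_le_zero.mp this
  have hv₀1 : ‖v₀‖ = 1 := hp₀n
  -- Fubini
  haveI : (ae μ).NeBot := ae_neBot.mpr (IsProbabilityMeasure.ne_zero μ)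
  have hfub : ∀ᵐ s ∂μ, ∀ᵐ h ∂lam, π h⁻¹ (ξ s) = v₀ := Measure.ae_ae_of_ae_prod hconst
  obtain ⟨s₀, hs₀, hs₀n⟩ := (hfub.and hξ1).exists
  set w := ξ s₀ with hw
  have hwn : w ≠ 0 := by
    intro h
    rw [h, norm_zero] at hs₀n
    exact one_ne_zero hs₀n.symm
  have hA : ∀ᵐ h ∂lam, π h v₀ = w := by
    filter_upwards [hs₀] with h hh
    rw [← hh]
    show π h (π h⁻¹ (ξ s₀)) = ξ s₀
    show (π h * π h⁻¹) (ξ s₀) = ξ s₀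
    rw [← map_mul, mul_inv_cancel, map_one]
    rfl
  haveI : (ae lam).NeBot := ae_neBot.mpr
    (fun h => IsOpen.measure_ne_zero lam isOpen_univ ⟨1, Set.mem_univ _⟩ (by simp [h]))
  refine ⟨w, hwn, fun h₀ => ?_⟩
  have hA2 : ∀ᵐ h ∂lam, π (h₀ * h) v₀ = w := by
    rw [ae_iff] at hA ⊢
    have : {h : H | ¬ π (h₀ * h) v₀ = w} = (fun h => h₀ * h) ⁻¹' {h : H | ¬ π h v₀ = w} :=
      rfl
    rw [this, measure_preimage_mul]
    exact hA
  obtain ⟨h, hh1, hh2⟩ := (hA.and hA2).exists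
  calc π h₀ w = π h₀ (π h v₀) := by rw [hh1]
    _ = (π h₀ * π h) v₀ := rfl
    _ = π (h₀ * h) v₀ := by rw [map_mul]
    _ = w := hh2
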